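/- arXiv:1804.05629 — 2 statements merged into one kernel-verified Lean document; each statement's English description precedes it below -/
import Mathlib

section
/- Let A, A' be abelian categories with torsion pairs (T, F) and (T', F'), and G : A' → A an exact additive functor with G(T') ⊆ T, G(F') ⊆ F, with G|_{T'} and G|_{F'} fully faithful, inducing surjections on Hom(F', T') and injections on Yext^1(F', T'). Then G is an equivalence if and only if both restrictions G|_{T'} : T' → T and G|_{F'} : F' → F are equivalences and G induces isomorphisms Yext^1_{A'}(F', T') → Yext^1_A(G F', G T') for all T' ∈ T', F' ∈ F'. -/
open CategoryTheory Category Limits Pretriangulated Triangulated ZeroObject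

namespace HRS

variable (A : Type*) [Category A] [Abelian A]

/-- A short exact sequence `0 ⟶ Y ⟶ E ⟶ X ⟶ 0` in `A`, i.e. an extension of `X` by `Y`. -/
structure SES (X Y : A) where
  E : A
  i : Y ⟶ E
  p : E ⟶ X
  w : i ≫ p = 0
  ex : (ShortComplex.mk i p w).ShortExact

/-- A torsion pair `(T, F)` in the abelian category `A`. -/
structure TorsionPair (T F : A → Prop) : Prop where
  hom_zero : ∀ ⦃t f : A⦄, T t → F f → ∀ (g : t ⟶ f), g = 0
  exists_ses : ∀ X : A, ∃ (t f : A) (i : t ⟶ X) (p : X ⟶ f) (w : i ≫ p = 0),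
    T t ∧ F f ∧ (ShortComplex.mk i p w).ShortExact

/-- `n`-fold Yoneda extensions of `X` by `Y`, presented as iterated splices of
short exact sequences. -/
inductive ExtSeq : ℕ → A → A → Type _
  | base {X Y : A} (s : SES A X Y) : ExtSeq 1 X Y
  | splice {n : ℕ} {X Y Z : A} (s : SES A Z Y) (ξ : ExtSeq n X Z) : ExtSeq (n + 1) X Y

/-- Morphisms of Yoneda extensions over a pair of morphisms on the two end terms. -/
inductive ExtHom : ∀ {n : ℕ} {X X' Y Y' : A}, (Y ⟶ Y') → (X ⟶ X') →
    ExtSeq A n X Y → ExtSeq A n X' Y' → Prop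
  | base {X X' Y Y' : A} {a : Y ⟶ Y'} {b : X ⟶ X'} (s : SES A X Y) (s' : SES A X' Y')
      (e : s.E ⟶ s'.E) (h1 : s.i ≫ e = a ≫ s'.i) (h2 : s.p ≫ b = e ≫ s'.p) :
      ExtHom a b (.base s) (.base s')
  | splice {n : ℕ} {X X' Y Y' Z Z' : A} {a : Y ⟶ Y'} {b : X ⟶ X'} (t : Z ⟶ Z')
      (s : SES A Z Y) (s' : SES A Z' Y') (ξ : ExtSeq A n X Z) (ξ' : ExtSeq A n X' Z')
      (e : s.E ⟶ s'.E) (h1 : s.i ≫ e = a ≫ s'.i) (h2 : s.p ≫ t = e ≫ s'.p)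
      (h : ExtHom t b ξ ξ') :
      ExtHom a b (.splice s ξ) (.splice s' ξ')

/-- The Yoneda equivalence relation on `n`-fold extensions of `X` by `Y`: the equivalence
relation generated by the existence of a morphism of extensions which is the identity
on both end terms. -/
def ExtEquiv {n : ℕ} {X Y : A} (ξ ξ' : ExtSeq A n X Y) : Prop :=
  Relation.EqvGen (fun ζ ζ' => ExtHom A (𝟙 Y) (𝟙 X) ζ ζ') ξ ξ'

/-- The `n`-th Yoneda extension group (as a set) `Yext^n_A(X, Y)`. -/
def Yext (n : ℕ) (X Y : A) : Type _ :=
  Quot (fun ξ ξ' : ExtSeq A n X Y => ExtHom A (𝟙 Y) (𝟙 X) ξ ξ')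

/-- The class of an extension in `Yext`. -/
def Yext.mk {n : ℕ} {X Y : A} (ξ : ExtSeq A n X Y) : Yext A n X Y := Quot.mk _ ξ

/-- The short exact sequence `0 ⟶ Y ⟶ Y ⟶ 0 ⟶ 0`. -/
noncomputable def sesToZero (Y : A) : SES A (0 : A) Y where
  E := Y
  i := 𝟙 Y
  p := 0
  w := by simp
  ex := (ShortComplex.Splitting.shortExact
    { r := 𝟙 Y
      s := 0
      f_r := by simp
      s_g := by apply Subsingleton.elim
      id := by simp })

/-- The short exact sequence `0 ⟶ 0 ⟶ 0 ⟶ 0 ⟶ 0`. -/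
noncomputable def sesZero : SES A (0 : A) (0 : A) where
  E := 0
  i := 0
  p := 0
  w := by simp
  ex := (ShortComplex.Splitting.shortExact
    { r := 0
      s := 0
      f_r := by apply Subsingleton.elim
      s_g := by apply Subsingleton.elim
      id := by apply Subsingleton.elim })

/-- The short exact sequence `0 ⟶ 0 ⟶ X ⟶ X ⟶ 0`. -/
noncomputable def sesFromZero (X : A) : SES A X (0 : A) where
  E := X
  i := 0
  p := 𝟙 X
  w := by simp
  ex := (ShortComplex.Splitting.shortExact
    { r := 0
      s := 𝟙 X
      f_r := by apply Subsingleton.elim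
      s_g := by simp
      id := by simp })

/-- The trivial 3-fold extension `0 → Y → Y → 0 → X → X → 0`, representing the zero
class in `Yext^3_A(X, Y)`. -/
noncomputable def trivialExt3 (X Y : A) : ExtSeq A 3 X Y :=
  ExtSeq.splice (sesToZero A Y) (ExtSeq.splice (sesZero A) (ExtSeq.base (sesFromZero A X)))

/-- `Sub P`: subobjects of objects satisfying `P`. -/
def SubP (P : A → Prop) (X : A) : Prop := ∃ (U : A) (m : X ⟶ U), P U ∧ Mono m

/-- `Fac P`: quotient objects of objects satisfying `P`. -/
def FacP (P : A → Prop) (X : A) : Prop := ∃ (U : A) (p : U ⟶ X), P U ∧ Epi p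

/-- `P * Q`: objects that are extensions of an object satisfying `Q` by one satisfying `P`. -/
def StarP (P Q : A → Prop) (X : A) : Prop :=
  ∃ (u v : A) (i : u ⟶ X) (p : X ⟶ v) (w : i ≫ p = 0),
    P u ∧ Q v ∧ (ShortComplex.mk i p w).ShortExact

variable (D : Type*) [Category D] [HasZeroObject D] [Preadditive D] [HasShift D ℤ]
  [∀ n : ℤ, (shiftFunctor D n).Additive] [Pretriangulated D]

/-- The heart of a t-structure, as a predicate on objects. -/
def heartProp (t : TStructure D) (X : D) : Prop := t.le 0 X ∧ t.ge 0 X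

/-- A t-structure is bounded if every object lies in some `Σ^i D^{≤0} ∩ Σ^j D^{≥0}`. -/
def IsBoundedTStructure (t : TStructure D) : Prop := ∀ X : D, ∃ a b : ℤ, t.ge a X ∧ t.le b X

/-- Data realizing an abelian category `A` as the heart of a t-structure `t` on `D`:
a fully faithful additive functor `A ⥤ D` whose essential image is the heart of `t`. -/
structure HeartData (t : TStructure D) where
  ι : A ⥤ D
  additive : ι.Additive
  full : ι.Full
  faithful : ι.Faithful
  essImage_iff : ∀ X : D, ι.essImage X ↔ heartProp D t X

variable {A D}

/-- The property, for a family `θ` of maps from `n`-fold Yoneda extensions in the heart to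
`Hom_D(X, Σ^n Y)`, of being the canonical family: it descends to the Yoneda extension
groups, `θ^1` sends a short exact sequence to the connecting morphism of an associated
distinguished triangle, and `θ^{n+1}` is computed on splices by `Σ^n(θ^1 ξ₁) ∘ θ^n ξ₂`. -/
structure IsCanThetaFamily {t : TStructure D} (h : HeartData A D t)
    (θ : ∀ (n : ℕ) (X Y : A), ExtSeq A n X Y → (h.ι.obj X ⟶ (h.ι.obj Y)⟦(n : ℤ)⟧)) : Prop where
  compat : ∀ {n : ℕ} {X Y : A} (ξ ξ' : ExtSeq A n X Y), ExtEquiv A ξ ξ' →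
    θ n X Y ξ = θ n X Y ξ'
  base : ∀ {X Y : A} (s : SES A X Y),
    Triangle.mk (h.ι.map s.i) (h.ι.map s.p)
      (θ 1 X Y (.base s) ≫ eqToHom (by norm_num)) ∈ distTriang D
  splice : ∀ {n : ℕ} {X Y Z : A} (s : SES A Z Y) (ξ : ExtSeq A n X Z),
    θ (n + 1) X Y (.splice s ξ) = θ n X Z ξ ≫ (θ 1 Z Y (.base s))⟦(n : ℤ)⟧' ≫
      (shiftFunctorAdd' D ((1 : ℕ) : ℤ) ((n : ℕ) : ℤ) (((n + 1 : ℕ)) : ℤ)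
        (by push_cast; ring)).inv.app (h.ι.obj Y)

/-- The map induced by `θ^n` on the Yoneda extension group `Yext^n(X, Y)`. -/
def thetaBar {t : TStructure D} {h : HeartData A D t}
    (θ : ∀ (n : ℕ) (X Y : A), ExtSeq A n X Y → (h.ι.obj X ⟶ (h.ι.obj Y)⟦(n : ℤ)⟧))
    (hθ : IsCanThetaFamily h θ) (n : ℕ) (X Y : A) :
    Yext A n X Y → (h.ι.obj X ⟶ (h.ι.obj Y)⟦(n : ℤ)⟧) :=
  Quot.lift (θ n X Y) (fun ξ ξ' hr => hθ.compat ξ ξ' (Relation.EqvGen.rel _ _ hr))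

variable (A D)

/-- The image of a short exact sequence under an exact functor. -/
def mapSES {A' : Type*} [Category A'] [Abelian A'] (G : A' ⥤ A) [G.Additive]
    (hG : ∀ S : ShortComplex A', S.ShortExact → (S.map G).ShortExact)
    {X Y : A'} (s : SES A' X Y) : SES A (G.obj X) (G.obj Y) where
  E := G.obj s.E
  i := G.map s.i
  p := G.map s.p
  w := by rw [← G.map_comp, s.w]; exact G.map_zero _ _
  ex := hG _ s.ex

/-- The image of a Yoneda extension under an exact functor. -/
def mapExtSeq {A' : Type*} [Category A'] [Abelian A'] (G : A' ⥤ A) [G.Additive]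
    (hG : ∀ S : ShortComplex A', S.ShortExact → (S.map G).ShortExact) :
    ∀ {n : ℕ} {X Y : A'}, ExtSeq A' n X Y → ExtSeq A n (G.obj X) (G.obj Y)
  | _, _, _, .base s => .base (mapSES A G hG s)
  | _, _, _, .splice s ξ => .splice (mapSES A G hG s) (mapExtSeq G hG ξ)

/-- Composition of a chain of morphisms `Σ^i X_i ⟶ Σ^{i+1} X_{i+1}` in `D`,
with all `X_i` in the heart. -/
def chainComp (ι : A ⥤ D) (obj : ℕ → A)
    (g : ∀ i : ℕ, ((ι.obj (obj i))⟦((i : ℕ) : ℤ)⟧ ⟶ (ι.obj (obj (i + 1)))⟦(((i + 1 : ℕ)) : ℤ)⟧)) :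
    ∀ n : ℕ, ((ι.obj (obj 0))⟦((0 : ℕ) : ℤ)⟧ ⟶ (ι.obj (obj n))⟦((n : ℕ) : ℤ)⟧)
  | 0 => 𝟙 _
  | n + 1 => chainComp ι obj g n ≫ g n

/-- A model of the bounded derived category `D^b(A)` of an abelian category `A`:
a triangulated category equipped with a bounded t-structure whose heart is `A`,
such that the canonical maps `Yext^n_A(X, Y) → Hom(X, Σ^n Y)` are bijective for all
`n ≥ 1` (the characteristic-class isomorphisms of the bounded derived category). -/
structure DerivedData where
  t : TStructure D
  bounded : IsBoundedTStructure D t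
  heart : HeartData A D t
  θ : ∀ (n : ℕ) (X Y : A), ExtSeq A n X Y → (heart.ι.obj X ⟶ (heart.ι.obj Y)⟦(n : ℤ)⟧)
  can : IsCanThetaFamily heart θ
  bij : ∀ (n : ℕ), 1 ≤ n → ∀ (X Y : A), Function.Bijective (thetaBar θ can n X Y)

variable {A D}

/-- Membership in the HRS-tilt `B = Σ(F) * T` of `A` with respect to a torsion pair
`(T, F)`, for an object of (a model of) `D^b(A)`. -/
def HRSTiltMem {t : TStructure D} (h : HeartData A D t) (T F : A → Prop) (X : D) : Prop :=
  ∃ (f tt : A), F f ∧ T tt ∧ ∃ (g : (h.ι.obj f)⟦(1 : ℤ)⟧ ⟶ X) (g' : X ⟶ h.ι.obj tt)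
    (δ : h.ι.obj tt ⟶ ((h.ι.obj f)⟦(1 : ℤ)⟧)⟦(1 : ℤ)⟧), Triangle.mk g g' δ ∈ distTriang D

section Aux

variable {C : Type*} [Category C] [Abelian C]

lemma isZero_src_of_mono_eq_zero {X Y : C} (f : X ⟶ Y) (hm : Mono f) (h : f = 0) : IsZero X := by
  rw [IsZero.iff_id_eq_zero, ← cancel_mono f, h, comp_zero, zero_comp]

lemma isZero_tgt_of_epi_eq_zero {X Y : C} (f : X ⟶ Y) (he : Epi f) (h : f = 0) : IsZero Y := by
  rw [IsZero.iff_id_eq_zero, ← cancel_epi f, h, comp_zero, zero_comp]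

/-- The underlying short exact sequence of a 1-fold extension. -/
def ExtSeq.toSES {X Y : C} : ExtSeq C 1 X Y → SES C X Y
  | .base s => s
  | .splice _ ξ => nomatch ξ

lemma ExtSeq.eq_base {X Y : C} (ξ : ExtSeq C 1 X Y) : ξ = .base ξ.toSES := by
  match ξ with
  | .base s => rfl
  | .splice _ ξ' => exact (nomatch ξ')

lemma extHom_base_iso {X Y : C} {s s' : SES C X Y}
    (h : ExtHom C (𝟙 Y) (𝟙 X) (ExtSeq.base s) (ExtSeq.base s')) :
    ∃ e : s.E ⟶ s'.E, IsIso e ∧ s.i ≫ e = s'.i ∧ e ≫ s'.p = s.p := by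
  cases h with
  | base _ _ e h1 h2 =>
    refine ⟨e, ?_, by simpa using h1, by simpa using h2.symm⟩
    let φ : ShortComplex.mk s.i s.p s.w ⟶ ShortComplex.mk s'.i s'.p s'.w :=
      { τ₁ := 𝟙 Y
        τ₂ := e
        τ₃ := 𝟙 X
        comm₁₂ := h1.symm
        comm₂₃ := h2.symm }
    exact ShortComplex.isIso₂_of_shortExact_of_isIso₁₃' φ s.ex s'.ex inferInstance inferInstance

lemma extEquiv_base_iso {X Y : C} {s s' : SES C X Y}
    (h : ExtEquiv C (ExtSeq.base s) (ExtSeq.base s')) :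
    ∃ e : s.E ⟶ s'.E, IsIso e ∧ s.i ≫ e = s'.i ∧ e ≫ s'.p = s.p := by
  have key : ∀ (ξ ζ : ExtSeq C 1 X Y),
      Relation.EqvGen (fun ζ ζ' => ExtHom C (𝟙 Y) (𝟙 X) ζ ζ') ξ ζ →
      ∃ e : ξ.toSES.E ⟶ ζ.toSES.E, IsIso e ∧ ξ.toSES.i ≫ e = ζ.toSES.i ∧
        e ≫ ζ.toSES.p = ξ.toSES.p := by
    intro ξ ζ hrel
    induction hrel with
    | rel x y hxy =>
        rw [x.eq_base, y.eq_base] at hxy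
        exact extHom_base_iso hxy
    | refl x => exact ⟨𝟙 _, inferInstance, by simp, by simp⟩
    | symm x y hxy ih =>
        obtain ⟨e, he, h1, h2⟩ := ih
        haveI := he
        refine ⟨inv e, inferInstance, ?_, ?_⟩
        · rw [← h1, Category.assoc, IsIso.hom_inv_id, comp_id]
        · rw [← h2, IsIso.inv_hom_id_assoc]
    | trans x y z h1 h2 ih1 ih2 =>
        obtain ⟨e, he, he1, he2⟩ := ih1
        obtain ⟨e', he', he1', he2'⟩ := ih2
        haveI := he; haveI := he'
        refine ⟨e ≫ e', inferInstance, ?_, ?_⟩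
        · rw [← Category.assoc, he1, he1']
        · rw [Category.assoc, he2', he2]
  exact key _ _ h

end Aux
section Aux2

variable {C : Type*} [Category C] [Abelian C]

lemma pushout_shortExact {X Y Y' : C} (s : SES C X Y) (a : Y ⟶ Y')
    (h0 : a ≫ (0 : Y' ⟶ X) = s.i ≫ s.p)
    (w : Limits.pushout.inl a s.i ≫ Limits.pushout.desc 0 s.p h0 = 0) :
    (ShortComplex.mk (Limits.pushout.inl a s.i) (Limits.pushout.desc 0 s.p h0) w).ShortExact := by
  haveI : Mono s.i := s.ex.mono_f
  haveI : Epi s.p := s.ex.epi_g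
  have hfac : pushout.inr a s.i ≫ pushout.desc (0 : Y' ⟶ X) s.p h0 = s.p :=
    pushout.inr_desc _ _ _
  haveI hepi : Epi (pushout.desc (0 : Y' ⟶ X) s.p h0) := epi_of_epi_fac hfac
  refine ShortComplex.ShortExact.mk' ?_ inferInstance hepi
  apply ShortComplex.exact_of_g_is_cokernel
  apply CokernelCofork.IsColimit.ofπ'
  intro W k hk
  have hik : s.i ≫ (pushout.inr a s.i ≫ k) = 0 := by
    rw [← Category.assoc, ← pushout.condition, Category.assoc, hk, comp_zero]
  obtain ⟨l, hl⟩ := CokernelCofork.IsColimit.desc' s.ex.gIsCokernel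
    (pushout.inr a s.i ≫ k) hik
  refine ⟨l, ?_⟩
  apply pushout.hom_ext
  · simpa [pushout.inl_desc_assoc] using hk.symm
  · simpa [pushout.inr_desc_assoc] using hl

/-- Pushout of a short exact sequence along a morphism on its sub-term. -/
@[reducible] noncomputable def SES.pushoutAlong {X Y Y' : C} (s : SES C X Y) (a : Y ⟶ Y') : SES C X Y' where
  E := Limits.pushout a s.i
  i := Limits.pushout.inl a s.i
  p := Limits.pushout.desc 0 s.p (by simp [s.w])
  w := by simp [pushout.inl_desc]
  ex := pushout_shortExact s a _ _

lemma pullback_shortExact {X X' Y : C} (s : SES C X Y) (b : X' ⟶ X)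
    (h0 : s.i ≫ s.p = (0 : Y ⟶ X') ≫ b)
    (w : pullback.lift s.i 0 h0 ≫ pullback.snd s.p b = 0) :
    (ShortComplex.mk (pullback.lift s.i 0 h0) (pullback.snd s.p b) w).ShortExact := by
  haveI : Mono s.i := s.ex.mono_f
  haveI : Epi s.p := s.ex.epi_g
  have hfac : pullback.lift s.i (0 : Y ⟶ X') h0 ≫ pullback.fst s.p b = s.i :=
    pullback.lift_fst _ _ _
  haveI hmono : Mono (pullback.lift s.i (0 : Y ⟶ X') h0) := mono_of_mono_fac hfac
  haveI : Epi (pullback.snd s.p b) := Abelian.epi_pullback_of_epi_f _ _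
  refine ShortComplex.ShortExact.mk' ?_ hmono inferInstance
  apply ShortComplex.exact_of_f_is_kernel
  apply KernelFork.IsLimit.ofι'
  intro W k hk
  have hkp : (k ≫ pullback.fst s.p b) ≫ s.p = 0 := by
    rw [Category.assoc, pullback.condition, ← Category.assoc, hk, zero_comp]
  obtain ⟨l, hl⟩ := KernelFork.IsLimit.lift' s.ex.fIsKernel (k ≫ pullback.fst s.p b) hkp
  refine ⟨l, ?_⟩
  apply pullback.hom_ext
  · simpa [hfac] using hl
  · simpa [pullback.lift_snd] using hk.symm

/-- Pullback of a short exact sequence along a morphism on its quotient term. -/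
@[reducible] noncomputable def SES.pullbackAlong {X X' Y : C} (s : SES C X Y) (b : X' ⟶ X) : SES C X' Y where
  E := Limits.pullback s.p b
  i := pullback.lift s.i 0 (by simp [s.w])
  p := pullback.snd s.p b
  w := by simp [pullback.lift_snd]
  ex := pullback_shortExact s b _ _

end Aux2
section Aux3

variable {A A' : Type*} [Category A] [Abelian A] [Category A'] [Abelian A']

lemma faithful_of_criteria {T' F' : A' → Prop} (tpA' : TorsionPair A' T' F')
    (G : A' ⥤ A) [G.Additive]
    (hex : ∀ S : ShortComplex A', S.ShortExact → (S.map G).ShortExact)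
    (hffT : ∀ x y : A', T' x → T' y → Function.Bijective (fun g : x ⟶ y => G.map g))
    (hffF : ∀ x y : A', F' x → F' y → Function.Bijective (fun g : x ⟶ y => G.map g)) :
    G.Faithful := by
  obtain ⟨hL, hC⟩ := ((Functor.exact_tfae G).out 0 3).1 hex
  constructor
  intro X' Y' g₁ g₂ hgg
  rw [← sub_eq_zero]
  set g := g₁ - g₂ with hgdef
  have hg0 : G.map g = 0 := by
    rw [hgdef, G.map_sub, hgg, sub_self]
  -- factor through the image
  haveI : Epi (G.map (Abelian.factorThruImage g)) :=
    preserves_epi_of_preservesColimit G _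
  haveI : Mono (G.map (Abelian.image.ι g)) :=
    preserves_mono_of_preservesLimit G _
  have hfac : G.map (Abelian.factorThruImage g) ≫ G.map (Abelian.image.ι g) = 0 := by
    rw [← G.map_comp, Abelian.image.fac, hg0]
  have hι0 : G.map (Abelian.image.ι g) = 0 := by
    rw [← cancel_epi (G.map (Abelian.factorThruImage g)), hfac, comp_zero]
  have hGI : IsZero (G.obj (Abelian.image g)) :=
    isZero_src_of_mono_eq_zero _ inferInstance hι0
  -- torsion decomposition of the image
  obtain ⟨t, f, i, p, w, ht, hf, hse⟩ := tpA'.exists_ses (Abelian.image g)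
  have hmap := hex _ hse
  have hGi0 : G.map i = 0 := hGI.eq_of_tgt _ _
  have hGp0 : G.map p = 0 := hGI.eq_of_src _ _
  haveI : Mono (G.map i) := hmap.mono_f
  haveI : Epi (G.map p) := hmap.epi_g
  have hGt : IsZero (G.obj t) := isZero_src_of_mono_eq_zero _ inferInstance hGi0
  have hGf : IsZero (G.obj f) := isZero_tgt_of_epi_eq_zero _ inferInstance hGp0
  have hit : IsZero t := by
    rw [IsZero.iff_id_eq_zero]
    apply (hffT t t ht ht).1
    simp only [G.map_id, G.map_zero]
    exact hGt.eq_of_src _ _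
  have hif : IsZero f := by
    rw [IsZero.iff_id_eq_zero]
    apply (hffF f f hf hf).1
    simp only [G.map_id, G.map_zero]
    exact hGf.eq_of_src _ _
  have hI : IsZero (Abelian.image g) :=
    hse.exact.isZero_X₂ (hit.eq_of_src _ _) (hif.eq_of_tgt _ _)
  have : Abelian.image.ι g = 0 := hI.eq_of_src _ _
  rw [← Abelian.image.fac g, this, comp_zero]

end Aux3
section Aux4

variable {A A' : Type*} [Category A] [Abelian A] [Category A'] [Abelian A']

lemma full_of_criteria {T F : A → Prop} {T' F' : A' → Prop}
    (tpA : TorsionPair A T F) (tpA' : TorsionPair A' T' F')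
    (G : A' ⥤ A) [G.Additive]
    (hex : ∀ S : ShortComplex A', S.ShortExact → (S.map G).ShortExact)
    (hT : ∀ x : A', T' x → T (G.obj x)) (hF : ∀ x : A', F' x → F (G.obj x))
    (hffT : ∀ x y : A', T' x → T' y → Function.Bijective (fun g : x ⟶ y => G.map g))
    (hffF : ∀ x y : A', F' x → F' y → Function.Bijective (fun g : x ⟶ y => G.map g))
    (hsurj : ∀ f t : A', F' f → T' t → Function.Surjective (fun g : f ⟶ t => G.map g))
    (hinj : ∀ f t : A', F' f → T' t → ∀ s s' : SES A' f t,
      ExtEquiv A (.base (mapSES A G hex s)) (.base (mapSES A G hex s')) →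
        ExtEquiv A' (.base s) (.base s')) :
    G.Full := by
  obtain ⟨hL, hC⟩ := ((Functor.exact_tfae G).out 0 3).1 hex
  constructor
  intro X' Y' h
  obtain ⟨tX, fX, iX, pX, wX, htX, hfX, sexX⟩ := tpA'.exists_ses X'
  obtain ⟨tY, fY, iY, pY, wY, htY, hfY, sexY⟩ := tpA'.exists_ses Y'
  have hGX := hex _ sexX
  have hGY := hex _ sexY
  have hz : G.map iX ≫ (h ≫ G.map pY) = 0 := by
    rw [← Category.assoc]
    exact tpA.hom_zero (hT tX htX) (hF fY hfY) _
  -- Step A : the torsion component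
  obtain ⟨α, hα⟩ : {α : G.obj tX ⟶ G.obj tY // α ≫ G.map iY = G.map iX ≫ h} := KernelFork.IsLimit.lift' hGY.fIsKernel (G.map iX ≫ h)
    (by exact (Category.assoc _ _ _).trans hz)
  have hα' : α ≫ G.map iY = G.map iX ≫ h := by exact hα
  obtain ⟨a, ha⟩ := (hffT tX tY htX htY).2 α
  simp only at ha
  -- Step B : the torsion-free component
  obtain ⟨β, hβ⟩ : {β : G.obj fX ⟶ G.obj fY // G.map pX ≫ β = h ≫ G.map pY} := CokernelCofork.IsColimit.desc' hGX.gIsCokernel (h ≫ G.map pY)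
    (by exact hz)
  have hβ' : G.map pX ≫ β = h ≫ G.map pY := by exact hβ
  obtain ⟨b, hb⟩ := (hffF fX fY hfX hfY).2 β
  simp only at hb
  -- the pushout and pullback extensions
  let sX : SES A' fX tX := ⟨X', iX, pX, wX, sexX⟩
  let sY : SES A' fY tY := ⟨Y', iY, pY, wY, sexY⟩
  let sa : SES A' fX tY := sX.pushoutAlong a
  let sb : SES A' fX tY := sY.pullbackAlong b
  -- the images of the pushout and pullback under G
  let hPc := isColimitOfHasPushoutOfPreservesColimit G a iX
  let hQl := isLimitOfHasPullbackOfPreservesLimit G pY b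
  obtain ⟨ψ, hψ1, hψ2⟩ : {ψ : G.obj X' ⟶ G.obj (pullback pY b) // ψ ≫ G.map (pullback.fst pY b) = h ∧
      ψ ≫ G.map (pullback.snd pY b) = G.map pX} := PullbackCone.IsLimit.lift' hQl h (G.map pX)
    (by rw [hb, ← hβ'])
  have hψ1' : ψ ≫ G.map (pullback.fst pY b) = h := by simpa using hψ1
  have hψ2' : ψ ≫ G.map (pullback.snd pY b) = G.map pX := by simpa using hψ2
  have hbi_fst : sb.i ≫ pullback.fst pY b = iY := pullback.lift_fst _ _ _
  have hbi_snd : sb.i ≫ pullback.snd pY b = 0 := pullback.lift_snd _ _ _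
  have hcompat : G.map a ≫ G.map sb.i = G.map iX ≫ ψ := by
    apply PullbackCone.IsLimit.hom_ext hQl
    · show (G.map a ≫ G.map sb.i) ≫ G.map (pullback.fst pY b)
        = (G.map iX ≫ ψ) ≫ G.map (pullback.fst pY b)
      rw [Category.assoc, ← G.map_comp, hbi_fst, ha, Category.assoc, hψ1']
      exact hα'
    · show (G.map a ≫ G.map sb.i) ≫ G.map (pullback.snd pY b)
        = (G.map iX ≫ ψ) ≫ G.map (pullback.snd pY b)
      rw [Category.assoc, ← G.map_comp, hbi_snd, G.map_zero, comp_zero, Category.assoc,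
        hψ2', ← G.map_comp, wX, G.map_zero]
  obtain ⟨φ, hφ1, hφ2⟩ : {φ : G.obj (pushout a iX) ⟶ G.obj sb.E // G.map (pushout.inl a iX) ≫ φ = G.map sb.i ∧
      G.map (pushout.inr a iX) ≫ φ = ψ} := PushoutCocone.IsColimit.desc' hPc (G.map sb.i) ψ hcompat
  have hφ1' : G.map (pushout.inl a iX) ≫ φ = G.map sb.i := by simpa using hφ1
  have hφ2' : G.map (pushout.inr a iX) ≫ φ = ψ := by simpa using hφ2
  have hsa_p_inl : sa.i ≫ sa.p = 0 := sa.w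
  have hsa_p_inr : pushout.inr a iX ≫ sa.p = pX := pushout.inr_desc _ _ _
  have l1 : pushout.inl a iX ≫ sa.p = 0 := sa.w
  have l2 : sb.i ≫ pullback.snd pY b = 0 := sb.w
  have hφp : G.map sa.p ≫ 𝟙 _ = φ ≫ G.map (pullback.snd pY b) := by
    apply PushoutCocone.IsColimit.hom_ext hPc
    · show G.map (pushout.inl a iX) ≫ G.map sa.p ≫ 𝟙 _
        = G.map (pushout.inl a iX) ≫ φ ≫ G.map (pullback.snd pY b)
      rw [Category.comp_id, ← G.map_comp, l1, reassoc_of% hφ1', ← G.map_comp, l2,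
        G.map_zero]
    · show G.map (pushout.inr a iX) ≫ G.map sa.p ≫ 𝟙 _
        = G.map (pushout.inr a iX) ≫ φ ≫ G.map (pullback.snd pY b)
      rw [Category.comp_id, ← G.map_comp, hsa_p_inr, reassoc_of% hφ2', hψ2']
  -- the morphism of extensions in `A`, and descent to `A'`
  have hhom : ExtHom A (𝟙 (G.obj tY)) (𝟙 (G.obj fX))
      (.base (mapSES A G hex sa)) (.base (mapSES A G hex sb)) := by
    refine ExtHom.base _ _ φ ?_ ?_
    · show G.map (pushout.inl a iX) ≫ φ = 𝟙 _ ≫ G.map sb.i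
      rw [Category.id_comp]
      exact hφ1'
    · exact hφp
  have hEq : ExtEquiv A' (.base sa) (.base sb) :=
    hinj fX tY hfX htY sa sb (Relation.EqvGen.rel _ _ hhom)
  obtain ⟨e, he, he1, he2⟩ := extEquiv_base_iso hEq
  -- the candidate morphism
  let g₀ : X' ⟶ Y' := pushout.inr a iX ≫ e ≫ pullback.fst pY b
  have f1 : iX ≫ g₀ = a ≫ iY := by
    show iX ≫ pushout.inr a iX ≫ e ≫ pullback.fst pY b = a ≫ iY
    rw [← Category.assoc, ← pushout.condition, Category.assoc]
    have : pushout.inl a iX ≫ e = sb.i := he1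
    rw [reassoc_of% this, hbi_fst]
  have f2 : g₀ ≫ pY = pX ≫ b := by
    show (pushout.inr a iX ≫ e ≫ pullback.fst pY b) ≫ pY = pX ≫ b
    simp only [Category.assoc, pullback.condition]
    have : e ≫ pullback.snd pY b = sa.p := he2
    rw [reassoc_of% this]
    rw [reassoc_of% hsa_p_inr]
  set d := h - G.map g₀ with hd
  have hd2 : d ≫ G.map pY = 0 := by
    rw [hd, Preadditive.sub_comp, ← G.map_comp, f2, G.map_comp, ← hβ', hb, sub_self]
  have hd1 : G.map iX ≫ d = 0 := by
    rw [hd, Preadditive.comp_sub, ← G.map_comp, f1, G.map_comp, ha, hα', sub_self]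
  obtain ⟨u, hu⟩ : {u : G.obj X' ⟶ G.obj tY // u ≫ G.map iY = d} := KernelFork.IsLimit.lift' hGY.fIsKernel d hd2
  have hu' : u ≫ G.map iY = d := by simpa using hu
  haveI : Mono (G.map iY) := hGY.mono_f
  have hGiXu : G.map iX ≫ u = 0 := by
    rw [← cancel_mono (G.map iY), Category.assoc, hu', hd1, zero_comp]
  obtain ⟨c, hc⟩ : {c : G.obj fX ⟶ G.obj tY // G.map pX ≫ c = u} := CokernelCofork.IsColimit.desc' hGX.gIsCokernel u hGiXu
  have hc' : G.map pX ≫ c = u := by simpa using hc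
  obtain ⟨c', hc''⟩ := hsurj fX tY hfX htY c
  simp only at hc''
  have hkey : G.map (pX ≫ c' ≫ iY) = d := by
    rw [G.map_comp, G.map_comp, hc'', reassoc_of% hc', hu']
  refine ⟨g₀ + pX ≫ c' ≫ iY, ?_⟩
  rw [G.map_add, hkey, hd]
  abel
end Aux4
theorem statement_16' {A A' : Type*} [Category A] [Abelian A] [Category A'] [Abelian A']
    {T F : A → Prop} {T' F' : A' → Prop}
    (tpA : TorsionPair A T F) (tpA' : TorsionPair A' T' F')
    (G : A' ⥤ A) [G.Additive]
    (hex : ∀ S : ShortComplex A', S.ShortExact → (S.map G).ShortExact)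
    (hT : ∀ x : A', T' x → T (G.obj x)) (hF : ∀ x : A', F' x → F (G.obj x))
    (hffT : ∀ x y : A', T' x → T' y → Function.Bijective (fun g : x ⟶ y => G.map g))
    (hffF : ∀ x y : A', F' x → F' y → Function.Bijective (fun g : x ⟶ y => G.map g))
    (hsurj : ∀ f t : A', F' f → T' t → Function.Surjective (fun g : f ⟶ t => G.map g))
    (hinj : ∀ f t : A', F' f → T' t → ∀ s s' : SES A' f t,
      ExtEquiv A (.base (mapSES A G hex s)) (.base (mapSES A G hex s')) →
        ExtEquiv A' (.base s) (.base s')) :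
    G.IsEquivalence ↔
      ((∀ x : A, T x → ∃ x' : A', T' x' ∧ Nonempty (G.obj x' ≅ x)) ∧
       (∀ x : A, F x → ∃ x' : A', F' x' ∧ Nonempty (G.obj x' ≅ x)) ∧
       (∀ f t : A', F' f → T' t → ∀ sA : SES A (G.obj f) (G.obj t),
          ∃ s' : SES A' f t, ExtEquiv A (.base (mapSES A G hex s')) (.base sA))) := by
  constructor
  · intro hGe
    haveI := hGe
    refine ⟨?_, ?_, ?_⟩
    · intro x hx
      obtain ⟨t', f', i, p, w, ht', hf', sex⟩ := tpA'.exists_ses (G.objPreimage x)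
      have e_x : G.obj (G.objPreimage x) ≅ x := G.objObjPreimageIso x
      have hmap := hex _ sex
      have hGp0 : G.map p = 0 := by
        have hcz : e_x.inv ≫ G.map p = 0 := tpA.hom_zero hx (hF f' hf') _
        calc G.map p = e_x.hom ≫ e_x.inv ≫ G.map p := by rw [e_x.hom_inv_id_assoc]
        _ = 0 := by rw [hcz, comp_zero]
      haveI : Epi (G.map p) := hmap.epi_g
      have hGf : IsZero (G.obj f') := isZero_tgt_of_epi_eq_zero _ inferInstance hGp0
      have hf0 : IsZero f' := by
        rw [IsZero.iff_id_eq_zero]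
        apply G.map_injective
        rw [G.map_id, G.map_zero]
        exact hGf.eq_of_src _ _
      have hp0 : p = 0 := hf0.eq_of_tgt _ _
      haveI : Mono i := sex.mono_f
      haveI : Epi i := sex.exact.epi_f hp0
      haveI : IsIso i := isIso_of_mono_of_epi i
      exact ⟨t', ht', ⟨G.mapIso (asIso i) ≪≫ e_x⟩⟩
    · intro x hx
      obtain ⟨t', f', i, p, w, ht', hf', sex⟩ := tpA'.exists_ses (G.objPreimage x)
      have e_x : G.obj (G.objPreimage x) ≅ x := G.objObjPreimageIso x
      have hmap := hex _ sex
      have hGi0 : G.map i = 0 := by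
        have hcz : G.map i ≫ e_x.hom = 0 := tpA.hom_zero (hT t' ht') hx _
        calc G.map i = (G.map i ≫ e_x.hom) ≫ e_x.inv := by
              rw [Category.assoc, e_x.hom_inv_id, Category.comp_id]
        _ = 0 := by rw [hcz, zero_comp]
      haveI : Mono (G.map i) := hmap.mono_f
      have hGt : IsZero (G.obj t') := isZero_src_of_mono_eq_zero _ inferInstance hGi0
      have ht0 : IsZero t' := by
        rw [IsZero.iff_id_eq_zero]
        apply G.map_injective
        rw [G.map_id, G.map_zero]
        exact hGt.eq_of_src _ _
      have hi0 : i = 0 := ht0.eq_of_src _ _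
      haveI : Epi p := sex.epi_g
      haveI : Mono p := sex.exact.mono_g hi0
      haveI : IsIso p := isIso_of_mono_of_epi p
      exact ⟨f', hf', ⟨(G.mapIso (asIso p)).symm ≪≫ e_x⟩⟩
    · intro f t hf' ht' sA
      have eE : G.obj (G.objPreimage sA.E) ≅ sA.E := G.objObjPreimageIso sA.E
      let i' : t ⟶ G.objPreimage sA.E := G.preimage (sA.i ≫ eE.inv)
      let p' : G.objPreimage sA.E ⟶ f := G.preimage (eE.hom ≫ sA.p)
      have hGi' : G.map i' = sA.i ≫ eE.inv := G.map_preimage _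
      have hGp' : G.map p' = eE.hom ≫ sA.p := G.map_preimage _
      have w' : i' ≫ p' = 0 := by
        apply G.map_injective
        rw [G.map_comp, hGi', hGp', G.map_zero]
        simp [sA.w]
      have hSE : ((ShortComplex.mk i' p' w').map G).ShortExact := by
        refine ShortComplex.shortExact_of_iso
          (ShortComplex.isoMk (S₁ := ShortComplex.mk sA.i sA.p sA.w)
            (S₂ := (ShortComplex.mk i' p' w').map G)
            (Iso.refl _) eE.symm (Iso.refl _) ?_ ?_) sA.ex
        · dsimp
          change 𝟙 _ ≫ G.map i' = _
          rw [hGi']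
          simp
          rfl
        · dsimp
          change eE.inv ≫ G.map p' = _
          rw [hGp']
          simp
          exact (Category.comp_id _).symm
      have hexact : (ShortComplex.mk i' p' w').ShortExact := by
        haveI : Mono (G.map i') := hSE.mono_f
        haveI : Epi (G.map p') := hSE.epi_g
        haveI : Mono i' := G.mono_of_mono_map inferInstance
        haveI : Epi p' := G.epi_of_epi_map inferInstance
        exact ShortComplex.ShortExact.mk'
          (G.reflects_exact_of_faithful _ hSE.exact) inferInstance inferInstance
      refine ⟨⟨G.objPreimage sA.E, i', p', w', hexact⟩, ?_⟩
      apply Relation.EqvGen.rel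
      refine ExtHom.base _ _ eE.hom ?_ ?_
      · show G.map i' ≫ eE.hom = 𝟙 _ ≫ sA.i
        rw [hGi']
        simp
      · show G.map p' ≫ 𝟙 _ = eE.hom ≫ sA.p
        rw [hGp']
        simp
  · rintro ⟨h1, h2, h3⟩
    haveI hfaith : G.Faithful := faithful_of_criteria tpA' G hex hffT hffF
    haveI hfull : G.Full := full_of_criteria tpA tpA' G hex hT hF hffT hffF hsurj hinj
    haveI : G.EssSurj := by
      constructor
      intro x
      obtain ⟨t, f, i, p, w, ht, hf, sex⟩ := tpA.exists_ses x
      obtain ⟨t', ht', ⟨u⟩⟩ := h1 t ht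
      obtain ⟨f', hf', ⟨v⟩⟩ := h2 f hf
      let sA : SES A (G.obj f') (G.obj t') :=
        { E := x
          i := u.hom ≫ i
          p := p ≫ v.inv
          w := by
            rw [Category.assoc, reassoc_of% w, zero_comp, comp_zero]
          ex := by
            refine ShortComplex.shortExact_of_iso ?_ sex
            exact ShortComplex.isoMk u.symm (Iso.refl x) v.symm (by simp) (by simp) }
      obtain ⟨s', hs'⟩ := h3 f' t' hf' ht' sA
      obtain ⟨e, he, _, _⟩ := extEquiv_base_iso hs'
      haveI := he
      exact ⟨s'.E, ⟨@asIso _ _ _ _ e he⟩⟩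
    exact { faithful := inferInstance, full := inferInstance, essSurj := inferInstance }
/-- Under the hypotheses of the fully-faithfulness criterion, `G` is an
equivalence iff its restrictions to the torsion(-free) classes are equivalences and it
induces isomorphisms on `Yext^1(F', T')`. -/
theorem statement_16 {A A' : Type*} [Category A] [Abelian A] [Category A'] [Abelian A']
    {T F : A → Prop} {T' F' : A' → Prop}
    (tpA : TorsionPair A T F) (tpA' : TorsionPair A' T' F')
    (G : A' ⥤ A) [G.Additive]
    (hex : ∀ S : ShortComplex A', S.ShortExact → (S.map G).ShortExact)
    (hT : ∀ x : A', T' x → T (G.obj x)) (hF : ∀ x : A', F' x → F (G.obj x))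
    (hffT : ∀ x y : A', T' x → T' y → Function.Bijective (fun g : x ⟶ y => G.map g))
    (hffF : ∀ x y : A', F' x → F' y → Function.Bijective (fun g : x ⟶ y => G.map g))
    (hsurj : ∀ f t : A', F' f → T' t → Function.Surjective (fun g : f ⟶ t => G.map g))
    (hinj : ∀ f t : A', F' f → T' t → ∀ s s' : SES A' f t,
      ExtEquiv A (.base (mapSES A G hex s)) (.base (mapSES A G hex s')) →
        ExtEquiv A' (.base s) (.base s')) :
    G.IsEquivalence ↔
      ((∀ x : A, T x → ∃ x' : A', T' x' ∧ Nonempty (G.obj x' ≅ x)) ∧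
       (∀ x : A, F x → ∃ x' : A', F' x' ∧ Nonempty (G.obj x' ≅ x)) ∧
       (∀ f t : A', F' f → T' t → ∀ sA : SES A (G.obj f) (G.obj t),
          ∃ s' : SES A' f t, ExtEquiv A (.base (mapSES A G hex s')) (.base sA))) := by
  exact statement_16' tpA tpA' G hex hT hF hffT hffF hsurj hinj

end HRS
end

section
/- Let A be an abelian category with a torsion pair (T, F), and let B = Σ(F) * T be the HRS-tilt inside D^b(A), i.e. B = {X ∈ D^b(A) : H^{-1}(X) ∈ F, H^0(X) ∈ T, H^i(X) = 0 for i ≠ -1, 0}. Then (Σ(F), T) is a torsion pair in the abelian category B. -/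
open CategoryTheory Category Limits Pretriangulated Triangulated ZeroObject

namespace HRS

variable (A : Type*) [Category A] [Abelian A]

variable (D : Type*) [Category D] [HasZeroObject D] [Preadditive D] [HasShift D ℤ]
  [∀ n : ℤ, (shiftFunctor D n).Additive] [Pretriangulated D]

variable {A D}

variable (A D)

variable {A D}

/-- Auxiliary: a morphism from an object which is `≤ a` to an object which is `≥ b`
with `a < b` vanishes. -/
lemma aux_tzero {D : Type*} [Category D] [HasZeroObject D] [Preadditive D] [HasShift D ℤ]
    [∀ n : ℤ, (shiftFunctor D n).Additive] [Pretriangulated D]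
    (t : TStructure D) {X Y : D} (f : X ⟶ Y) (a b : ℤ) (hab : a < b)
    (hX : t.le a X) (hY : t.ge b Y) : f = 0 := by
  have h1 : t.le 0 (X⟦a⟧) := t.le_shift a a 0 (by omega) X hX
  have h2 : t.ge (b - a) (Y⟦a⟧) := t.ge_shift b a (b - a) (by omega) Y hY
  have h3 : t.ge 1 (Y⟦a⟧) := t.ge_antitone (by omega) _ h2
  have h4 := t.zero' (f⟦a⟧') h1 h3
  apply (shiftFunctor D a).map_injective
  simpa using h4

/-- Auxiliary: additive functors preserve zero objects. -/
lemma aux_isZero_obj {C₁ C₂ : Type*} [Category C₁] [Category C₂] [Preadditive C₁]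
    [Preadditive C₂] (G : C₁ ⥤ C₂) [G.Additive] {X : C₁} (h : IsZero X) :
    IsZero (G.obj X) := by
  rw [IsZero.iff_id_eq_zero, ← G.map_id, h.eq_of_src (𝟙 X) 0, G.map_zero]

/-- For a torsion pair `(T, F)` in `A`, the pair `(Σ F, T)` is a torsion
pair in the HRS-tilt `B = Σ(F) * T ⊆ D^b(A)`. -/
theorem statement_17 {A B : Type*} [Category A] [Abelian A] [Category B] [Abelian B]
    {D : Type*} [Category D] [HasZeroObject D] [Preadditive D] [HasShift D ℤ]
    [∀ n : ℤ, (shiftFunctor D n).Additive] [Pretriangulated D]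
    (dd : DerivedData A D) {T F : A → Prop} (tp : TorsionPair A T F)
    (tB : TStructure D) (hB : HeartData B D tB)
    (hBheart : ∀ X : D, hB.ι.essImage X ↔ HRSTiltMem dd.heart T F X) :
    TorsionPair B
      (fun b => ∃ f : A, F f ∧ Nonempty (hB.ι.obj b ≅ (dd.heart.ι.obj f)⟦(1 : ℤ)⟧))
      (fun b => ∃ t : A, T t ∧ Nonempty (hB.ι.obj b ≅ dd.heart.ι.obj t)) := by
  haveI := hB.full
  haveI := hB.faithful
  haveI := hB.additive
  haveI := dd.heart.additive
  -- the image of any object of `B` lies in the heart of `tB`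
  have heartB : ∀ c : B, tB.le 0 (hB.ι.obj c) ∧ tB.ge 0 (hB.ι.obj c) := fun c =>
    (hB.essImage_iff _).1 (hB.ι.obj_mem_essImage c)
  -- the image of any object of `A` lies in the heart of `dd.t`
  have heartA : ∀ c : A, dd.t.le 0 (dd.heart.ι.obj c) ∧ dd.t.ge 0 (dd.heart.ι.obj c) :=
    fun c => (dd.heart.essImage_iff _).1 (dd.heart.ι.obj_mem_essImage c)
  constructor
  · -- no nonzero morphisms from `Σ F` to `T`
    rintro bt bf ⟨f, hf, ⟨e1⟩⟩ ⟨tt, htt, ⟨e2⟩⟩ g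
    apply hB.ι.map_injective
    rw [Functor.map_zero]
    have hLE : dd.t.le (-1) ((dd.heart.ι.obj f)⟦(1 : ℤ)⟧) :=
      dd.t.le_shift 0 1 (-1) (by omega) _ (heartA f).1
    have hφ : e1.inv ≫ hB.ι.map g ≫ e2.hom = 0 :=
      aux_tzero dd.t _ (-1) 0 (by omega) hLE (heartA tt).2
    calc hB.ι.map g = e1.hom ≫ (e1.inv ≫ hB.ι.map g ≫ e2.hom) ≫ e2.inv := by simp
      _ = 0 := by rw [hφ]; simp
  · -- existence of the torsion short exact sequence
    intro X
    obtain ⟨f, tt, hf, htt, g, g', δ, hT⟩ :=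
      (hBheart (hB.ι.obj X)).1 (hB.ι.obj_mem_essImage X)
    -- produce zero objects lying in `T` and in `F`
    obtain ⟨t0, f0, i0, p0, w0, ht0, hf0, ex0⟩ := tp.exists_ses 0
    haveI := ex0.mono_f
    haveI := ex0.epi_g
    have hzt0 : IsZero t0 :=
      IsZero.of_mono_eq_zero i0 ((isZero_zero A).eq_of_tgt i0 0)
    have hzf0 : IsZero f0 :=
      IsZero.of_epi_eq_zero p0 ((isZero_zero A).eq_of_src p0 0)
    have hzιt0 : IsZero (dd.heart.ι.obj t0) := aux_isZero_obj _ hzt0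
    have hzιf0 : IsZero ((dd.heart.ι.obj f0)⟦(1 : ℤ)⟧) :=
      aux_isZero_obj (shiftFunctor D (1 : ℤ)) (aux_isZero_obj _ hzf0)
    -- `(ι f)⟦1⟧` lies in the HRS tilt
    have mem1 : HRSTiltMem dd.heart T F ((dd.heart.ι.obj f)⟦(1 : ℤ)⟧) := by
      refine ⟨f, t0, hf, ht0, 𝟙 _, 0, 0, ?_⟩
      refine isomorphic_distinguished _
        (contractible_distinguished ((dd.heart.ι.obj f)⟦(1 : ℤ)⟧)) _ ?_
      exact Triangle.isoMk _ _ (Iso.refl _) (Iso.refl _) hzιt0.isoZero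
        (by rfl) ((isZero_zero D).eq_of_tgt _ _) (hzιt0.eq_of_src _ _)
    -- `ι tt` lies in the HRS tilt
    have mem2 : HRSTiltMem dd.heart T F (dd.heart.ι.obj tt) := by
      refine ⟨f0, tt, hf0, htt, 0, 𝟙 _, 0, ?_⟩
      refine isomorphic_distinguished _
        (contractible_distinguished₁ (dd.heart.ι.obj tt)) _ ?_
      exact Triangle.isoMk _ _ hzιf0.isoZero (Iso.refl _) (Iso.refl _)
        (hzιf0.eq_of_src _ _) (by rfl) (by simp only [Triangle.mk, comp_zero, zero_comp])
    -- lift the extreme terms of the triangle to `B`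
    obtain ⟨bf, ⟨ef⟩⟩ := (hBheart _).2 mem1
    obtain ⟨bt, ⟨et⟩⟩ := (hBheart _).2 mem2
    -- heart membership of the shifted objects for `tB`
    have hLEf : tB.le 0 ((dd.heart.ι.obj f)⟦(1 : ℤ)⟧) :=
      ((tB.le 0).prop_iff_of_iso ef).1 (heartB bf).1
    have hGEt : tB.ge 0 (dd.heart.ι.obj tt) :=
      ((tB.ge 0).prop_iff_of_iso et).1 (heartB bt).2
    obtain ⟨i, hi⟩ : ∃ i : bf ⟶ X, hB.ι.map i = ef.hom ≫ g :=
      ⟨hB.ι.preimage _, hB.ι.map_preimage _⟩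
    obtain ⟨p, hp⟩ : ∃ p : X ⟶ bt, hB.ι.map p = g' ≫ et.inv :=
      ⟨hB.ι.preimage _, hB.ι.map_preimage _⟩
    have hgg' : g ≫ g' = 0 := comp_distTriang_mor_zero₁₂ _ hT
    have hw : i ≫ p = 0 := by
      apply hB.ι.map_injective
      rw [Functor.map_comp, hi, hp, Functor.map_zero]
      rw [assoc, reassoc_of% hgg']
      simp
    -- `i` is a monomorphism
    haveI hmono : Mono i := by
      apply Preadditive.mono_of_cancel_zero
      intro c u hu
      have hu' : (hB.ι.map u ≫ ef.hom) ≫ g = 0 := by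
        have h := congrArg hB.ι.map hu
        rw [Functor.map_comp, hi, Functor.map_zero] at h
        simpa [assoc] using h
      obtain ⟨w', hw'⟩ := Triangle.coyoneda_exact₂ _ (inv_rot_of_distTriang _ hT)
        (hB.ι.map u ≫ ef.hom) hu'
      have hz : w' = 0 := by
        refine aux_tzero tB _ 0 1 (by omega) (heartB c).1 ?_
        exact tB.ge_shift 0 (-1) 1 (by omega) _ hGEt
      apply hB.ι.map_injective
      rw [Functor.map_zero]
      have : hB.ι.map u = (hB.ι.map u ≫ ef.hom) ≫ ef.inv := by simp
      have h0 : hB.ι.map u ≫ ef.hom = 0 := hw'.trans (by rw [hz]; exact zero_comp)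
      rw [this, h0, zero_comp]
    -- `p` is an epimorphism
    haveI hepi : Epi p := by
      apply Preadditive.epi_of_cancel_zero
      intro c v hv
      have hv' : (Triangle.mk g g' δ).mor₂ ≫ (et.inv ≫ hB.ι.map v) = 0 := by
        have h := congrArg hB.ι.map hv
        rw [Functor.map_comp, hp, Functor.map_zero] at h
        have h' : g' ≫ et.inv ≫ hB.ι.map v = 0 := by simpa [assoc] using h
        exact h'
      obtain ⟨w', hw'⟩ := Triangle.yoneda_exact₃ _ hT (et.inv ≫ hB.ι.map v) hv'
      have hz : w' = 0 := by
        refine aux_tzero tB _ (-1) 0 (by omega) ?_ (heartB c).2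
        exact tB.le_shift 0 1 (-1) (by omega) _ hLEf
      apply hB.ι.map_injective
      rw [Functor.map_zero]
      have : hB.ι.map v = et.hom ≫ (et.inv ≫ hB.ι.map v) := by simp
      have h0 : et.inv ≫ hB.ι.map v = 0 := hw'.trans (by rw [hz]; exact comp_zero)
      rw [this, h0, comp_zero]
    -- exactness in the middle
    have hex : (ShortComplex.mk i p hw).Exact := by
      rw [ShortComplex.exact_iff_exact_up_to_refinements]
      intro c x₂ hx₂
      have h1 : hB.ι.map x₂ ≫ g' = 0 := by
        have h := congrArg hB.ι.map hx₂
        rw [Functor.map_comp, hp, Functor.map_zero] at h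
        have h2 : (hB.ι.map x₂ ≫ g' ≫ et.inv) ≫ et.hom = 0 := by
          rw [h, zero_comp]
        simpa using h2
      obtain ⟨y, hy⟩ := Triangle.coyoneda_exact₂ _ hT (hB.ι.map x₂) h1
      refine ⟨c, 𝟙 c, inferInstance, hB.ι.preimage (y ≫ ef.inv), ?_⟩
      apply hB.ι.map_injective
      rw [Functor.map_comp, Functor.map_comp, CategoryTheory.Functor.map_id,
        Functor.map_preimage, hi, id_comp]
      rw [hy]
      simp
      have key : ∀ {Z : D} (z : Z ⟶ (dd.heart.ι.obj f)⟦(1 : ℤ)⟧),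
          z ≫ g = (z ≫ ef.inv) ≫ ef.hom ≫ g := fun z => by simp
      exact key y
    exact ⟨bf, bt, i, p, hw, ⟨f, hf, ⟨ef⟩⟩, ⟨tt, htt, ⟨et⟩⟩,
      { exact := hex, mono_f := hmono, epi_g := hepi }⟩

end HRS
end
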